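/- Let n, r be positive integers, a_1 ∈ {0,…,n−1}, a_2 ∈ {0,…,r−1}, and define a'_1 := (n − a_1)·𝟙{a_1 ≠ 0} if n is odd, and a'_1 := n/2 − a_1 + n·𝟙{a_1 > n/2} if n is even. Then T^{(≤)}_{a_1,a_2}(n,r) = T_{a'_1,a_2}(n,r) and T^{(≥)}_{a_1,a_2}(n,r) = T^{(<)}_{a'_1,a_2}(n,r). -/
import Mathlib


open scoped Classical
open Finset

/-- `γ(x) = ∑_{i=1}^{n-1} i·𝟙{x_i > x_{i+1}}` (1-indexed). -/
noncomputable def gam {n r : ℕ} (x : Fin n → Fin r) : ℕ :=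
  ∑ i : Fin n, if h : (i : ℕ) + 1 < n then
      (if (x ⟨(i : ℕ) + 1, h⟩ : ℕ) < (x i : ℕ) then (i : ℕ) + 1 else 0) else 0

/-- `γ_{(≥)}(x) = ∑_{i=1}^{n-1} i·𝟙{x_i ≥ x_{i+1}}` (1-indexed). -/
noncomputable def gamGe {n r : ℕ} (x : Fin n → Fin r) : ℕ :=
  ∑ i : Fin n, if h : (i : ℕ) + 1 < n then
      (if (x ⟨(i : ℕ) + 1, h⟩ : ℕ) ≤ (x i : ℕ) then (i : ℕ) + 1 else 0) else 0

/-- `λ_{(<)}(x) = ∑_{i=1}^{n-1} i·𝟙{x_i < x_{i+1}}` (1-indexed). -/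
noncomputable def lamLt {n r : ℕ} (x : Fin n → Fin r) : ℕ :=
  ∑ i : Fin n, if h : (i : ℕ) + 1 < n then
      (if (x i : ℕ) < (x ⟨(i : ℕ) + 1, h⟩ : ℕ) then (i : ℕ) + 1 else 0) else 0

/-- `λ_{(≤)}(x) = ∑_{i=1}^{n-1} i·𝟙{x_i ≤ x_{i+1}}` (1-indexed). -/
noncomputable def lamLe {n r : ℕ} (x : Fin n → Fin r) : ℕ :=
  ∑ i : Fin n, if h : (i : ℕ) + 1 < n then
      (if (x i : ℕ) ≤ (x ⟨(i : ℕ) + 1, h⟩ : ℕ) then (i : ℕ) + 1 else 0) else 0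

/-- `σ(x) = ∑ x_i`. -/
noncomputable def sig {n r : ℕ} (x : Fin n → Fin r) : ℕ := ∑ i : Fin n, (x i : ℕ)

/-- The non-binary Tenengolts code `T_{a₁,a₂}(n,r)`. -/
noncomputable def Tcode (n r a₁ a₂ : ℕ) : Finset (Fin n → Fin r) :=
  Finset.univ.filter (fun x => gam x ≡ a₁ [MOD n] ∧ sig x ≡ a₂ [MOD r])

/-- The variant `T^{(≥)}_{a₁,a₂}(n,r)`. -/
noncomputable def TgeCode (n r a₁ a₂ : ℕ) : Finset (Fin n → Fin r) :=
  Finset.univ.filter (fun x => gamGe x ≡ a₁ [MOD n] ∧ sig x ≡ a₂ [MOD r])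

/-- The variant `T^{(<)}_{a₁,a₂}(n,r)`. -/
noncomputable def TltCode (n r a₁ a₂ : ℕ) : Finset (Fin n → Fin r) :=
  Finset.univ.filter (fun x => lamLt x ≡ a₁ [MOD n] ∧ sig x ≡ a₂ [MOD r])

/-- The variant `T^{(≤)}_{a₁,a₂}(n,r)`. -/
noncomputable def TleCode (n r a₁ a₂ : ℕ) : Finset (Fin n → Fin r) :=
  Finset.univ.filter (fun x => lamLe x ≡ a₁ [MOD n] ∧ sig x ≡ a₂ [MOD r])


lemma sum_aux13 (n : ℕ) :
    (∑ i ∈ Finset.range n, if i + 1 < n then i + 1 else 0) = ∑ i ∈ Finset.range n, i := by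
  cases n with
  | zero => simp
  | succ m =>
    rw [Finset.sum_range_succ, Finset.sum_range_succ' (fun i => i) m]
    simp only [if_neg (lt_irrefl (m+1)), add_zero]
    exact Finset.sum_congr rfl fun i hi =>
      if_pos (by simpa using Nat.succ_lt_succ (Finset.mem_range.mp hi))

lemma fin_sum_aux13 (n : ℕ) :
    (∑ i : Fin n, if (i : ℕ) + 1 < n then (i : ℕ) + 1 else 0) = ∑ i ∈ Finset.range n, i := by
  rw [Fin.sum_univ_eq_sum_range (fun i => if i + 1 < n then i + 1 else 0) n, sum_aux13]

lemma lamLe_add_gam13 {n r : ℕ} (x : Fin n → Fin r) :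
    lamLe x + gam x = ∑ i ∈ Finset.range n, i := by
  rw [lamLe, gam, ← Finset.sum_add_distrib, ← fin_sum_aux13 n]
  refine Finset.sum_congr rfl fun i _ => ?_
  by_cases h : (i : ℕ) + 1 < n
  · simp only [dif_pos h, if_pos h]
    split_ifs <;> omega
  · simp [h]

lemma gamGe_add_lamLt13 {n r : ℕ} (x : Fin n → Fin r) :
    gamGe x + lamLt x = ∑ i ∈ Finset.range n, i := by
  rw [gamGe, lamLt, ← Finset.sum_add_distrib, ← fin_sum_aux13 n]
  refine Finset.sum_congr rfl fun i _ => ?_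
  by_cases h : (i : ℕ) + 1 < n
  · simp only [dif_pos h, if_pos h]
    split_ifs <;> omega
  · simp [h]

theorem stmt_14 (n r : ℕ) (hn : 0 < n) (hr : 0 < r)
    (a₁ a₂ : ℕ) (ha₁ : a₁ < n) (ha₂ : a₂ < r)
    (a₁' : ℕ)
    (ha₁' : a₁' = if Odd n then (n - a₁) * (if a₁ ≠ 0 then 1 else 0)
                  else n / 2 + n * (if n / 2 < a₁ then 1 else 0) - a₁) :
    TleCode n r a₁ a₂ = Tcode n r a₁' a₂ ∧
    TgeCode n r a₁ a₂ = TltCode n r a₁' a₂ :=  by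
  set G : ℕ := ∑ i ∈ Finset.range n, i with hGdef
  have h2 : G * 2 = n * (n - 1) := Finset.sum_range_id_mul_two n
  have hn0 : ((n : ℕ) : ZMod n) = 0 := ZMod.natCast_self n
  have hc : (a₁' : ZMod n) + (a₁ : ZMod n) = (G : ZMod n) := by
    rcases Nat.even_or_odd n with he | ho
    · obtain ⟨m, hm⟩ := he
      rw [if_neg (Nat.not_odd_iff_even.mpr ⟨m, hm⟩)] at ha₁'
      have hmeq : n / 2 = m := by omega
      have hG : G = m * (n - 1) := by
        refine Nat.eq_of_mul_eq_mul_right (by norm_num : 0 < 2) ?_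
        rw [h2, hm]; ring
      have hmm : (m : ZMod n) + (m : ZMod n) = 0 := by
        have h' : ((m + m : ℕ) : ZMod n) = 0 := by rw [← hm]; exact hn0
        push_cast at h'; exact h'
      have hGc : (G : ZMod n) = (m : ZMod n) * (((n - 1 : ℕ) : ZMod n)) := by
        rw [hG]; push_cast; ring
      rw [Nat.cast_sub hn, hn0] at hGc
      rw [hmeq] at ha₁'
      by_cases hlt : m < a₁
      · rw [if_pos hlt, mul_one] at ha₁'
        have hle : a₁ ≤ m + n := by omega
        rw [ha₁', Nat.cast_sub hle, hGc]
        push_cast [hn0]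
        linear_combination hmm
      · rw [if_neg hlt, mul_zero, add_zero] at ha₁'
        have hle : a₁ ≤ m := by omega
        rw [ha₁', Nat.cast_sub hle, hGc]
        push_cast
        linear_combination hmm
    · rw [if_pos ho] at ha₁'
      obtain ⟨k, hk⟩ := ho
      have hG : G = n * k := by
        refine Nat.eq_of_mul_eq_mul_right (by norm_num : 0 < 2) ?_
        rw [h2, hk, Nat.add_sub_cancel]; ring
      have hGc : (G : ZMod n) = 0 := by rw [hG]; push_cast [hn0]; ring
      by_cases h0 : a₁ = 0
      · simp [h0, hGc] at ha₁' ⊢; simp [ha₁']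
      · rw [if_pos h0, mul_one] at ha₁'
        rw [ha₁', Nat.cast_sub ha₁.le, hGc, hn0]
        ring
  have hkey : ∀ L Γ : ℕ, L + Γ = G → ((L ≡ a₁ [MOD n]) ↔ (Γ ≡ a₁' [MOD n])) := by
    intro L Γ hLG
    rw [← ZMod.natCast_eq_natCast_iff, ← ZMod.natCast_eq_natCast_iff]
    have hs : (L : ZMod n) + (Γ : ZMod n) = (G : ZMod n) := by
      rw [← Nat.cast_add, hLG]
    constructor <;> intro h <;> linear_combination hs - hc - h
  constructor <;> ext x <;>
    simp only [TleCode, Tcode, TgeCode, TltCode, Finset.mem_filter, Finset.mem_univ,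
      true_and] <;>
    refine and_congr_left fun _ => ?_
  · exact hkey _ _ (lamLe_add_gam13 x)
  · exact hkey _ _ (gamGe_add_lamLt13 x)
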